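/- Consider the switched quantized control system with parameter α satisfying 1 < α < 3/2 and disturbance rounding error Δ_d with |Δ_d| ≤ 1/2. If at some time k the state satisfies condition (9), then for every integer h > 1 the control state satisfies the algebraic relation ū(k+h) = −α·ρ(e(k+h)). -/

import Mathlib

/-- Sign function: 1 for positive, 0 for zero, -1 for negative. -/
noncomputable def rsign (z : ℝ) : ℤ :=
  if 0 < z then 1 else if z = 0 then 0 else -1

/-- Rounding operator: rounds to the nearest integer, ties away from zero. -/
noncomputable def rho (z : ℝ) : ℤ :=
  if Int.fract |z| < 1/2 then rsign z * ⌊|z|⌋ else rsign z * (⌊|z|⌋ + 1)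

/-- The switched quantized control system with parameter `α` and disturbance
rounding error `Δd`, with state trajectory `(e, u)`. -/
def Traj (α Δd : ℝ) (e u : ℕ → ℝ) : Prop :=
  ∀ k : ℕ,
    e (k+1) = e k + (rho (u k) : ℝ) + Δd ∧
    u (k+1) = if rho (e (k+1)) = 0
      then ((rho (u k) : ℝ) + (rho (e k) : ℝ))
      else (u k + (rho (e k) : ℝ) - α * (rho (e (k+1)) : ℝ))

/-- Condition (9) at time `k`. -/
def Cond9 (α Δd : ℝ) (e u : ℕ → ℝ) (k : ℕ) : Prop :=
  (-(1/2) < e k ∧ e k < 1/2) ∧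
  (1 ≤ α - u k * (rsign Δd : ℝ) ∧ α - u k * (rsign Δd : ℝ) < 3/2) ∧
  (-(1/2) < u k ∧ u k < 1/2)

lemma rho_zero_of {z : ℝ} (h : |z| < 1/2) : rho z = 0 := by
  have h0 : (0:ℝ) ≤ |z| := abs_nonneg z
  have hf : ⌊|z|⌋ = 0 := Int.floor_eq_zero_iff.mpr ⟨h0, by linarith⟩
  have hfr : Int.fract |z| = |z| := by
    simp [Int.fract, hf]
  rw [rho, hfr, if_pos h, hf, mul_zero]

lemma rho_one_of {z : ℝ} (h1 : 1/2 ≤ z) (h2 : z < 3/2) : rho z = 1 := by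
  have hpos : 0 < z := by linarith
  have habs : |z| = z := abs_of_pos hpos
  have hs : rsign z = 1 := by simp [rsign, hpos]
  rcases lt_or_ge z 1 with hz | hz
  · have hf : ⌊z⌋ = 0 := Int.floor_eq_zero_iff.mpr ⟨by linarith, hz⟩
    have hfr : Int.fract z = z := by simp [Int.fract, hf]
    rw [rho, habs, hfr, if_neg (by linarith), hs, hf]; norm_num
  · have hf : ⌊z⌋ = 1 := by
      rw [Int.floor_eq_iff]
      constructor <;> push_cast <;> linarith
    have hfr : Int.fract z = z - 1 := by simp [Int.fract, hf]
    rw [rho, habs, hfr, if_pos (by linarith), hs, hf]; norm_num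

lemma rsign_neg (z : ℝ) : rsign (-z) = - rsign z := by
  rcases lt_trichotomy z 0 with h | h | h
  · simp [rsign, h, h.ne, h.not_gt, neg_pos.mpr h]
  · simp [rsign, h]
  · simp [rsign, h, h.ne', h.not_gt, not_lt.mpr h.le, (neg_nonpos.mpr h.le).not_gt,
      (neg_neg_iff_pos.mpr h).ne]

lemma rho_neg (z : ℝ) : rho (-z) = - rho z := by
  rw [rho, rho, abs_neg, rsign_neg]
  split_ifs <;> ring

lemma rho_negone_of {z : ℝ} (h1 : -(3/2) < z) (h2 : z ≤ -(1/2)) : rho z = -1 := by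
  have : rho (-z) = 1 := rho_one_of (by linarith) (by linarith)
  have h := rho_neg z
  omega

/-- Invariant states of the closed loop. -/
def Good (α Δd : ℝ) (e u : ℕ → ℝ) (m : ℕ) : Prop :=
  (|e m| < 1/2 ∧ u m = 0) ∨
  ((1/2 ≤ e m ∧ e m < 3/2 - Δd ∧ 0 < Δd) ∧ u m = -α) ∨
  ((-(3/2) - Δd < e m ∧ e m ≤ -(1/2) ∧ Δd < 0) ∧ u m = α)

lemma good_rel {α Δd : ℝ} (hα : 1 < α ∧ α < 3/2) {e u : ℕ → ℝ} {m : ℕ}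
    (hg : Good α Δd e u m) : u m = -α * (rho (e m) : ℝ) := by
  rcases hg with ⟨he, hu⟩ | ⟨⟨he1, he2, hd⟩, hu⟩ | ⟨⟨he1, he2, hd⟩, hu⟩
  · rw [rho_zero_of he, hu]; simp
  · rw [rho_one_of he1 (by linarith), hu]; simp
  · rw [rho_negone_of (by linarith) he2, hu]; push_cast; ring

lemma good_step {α Δd : ℝ} (hα : 1 < α ∧ α < 3/2) (hΔ : |Δd| ≤ 1/2)
    {e u : ℕ → ℝ} (htraj : Traj α Δd e u) {m : ℕ}
    (hg : Good α Δd e u m) : Good α Δd e u (m+1) := by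
  obtain ⟨hα1, hα2⟩ := hα
  have hΔ1 : -(1/2) ≤ Δd := by rw [abs_le] at hΔ; linarith [hΔ.1]
  have hΔ2 : Δd ≤ 1/2 := (abs_le.mp hΔ).2
  obtain ⟨hE, hU⟩ := htraj m
  rcases hg with ⟨he, hu⟩ | ⟨⟨he1, he2, hd⟩, hu⟩ | ⟨⟨he1, he2, hd⟩, hu⟩
  · -- A state
    have hre : rho (e m) = 0 := rho_zero_of he
    have hru : rho (u m) = 0 := rho_zero_of (by rw [hu]; norm_num)
    have hE' : e (m+1) = e m + Δd := by rw [hE, hru]; push_cast; ring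
    rw [abs_lt] at he
    rcases lt_or_ge (e (m+1)) (1/2) with hlt | hge
    · rcases lt_or_ge (-(1/2)) (e (m+1)) with hgt | hle
      · -- stays in A
        have hre' : rho (e (m+1)) = 0 := rho_zero_of (abs_lt.mpr ⟨hgt, hlt⟩)
        left
        refine ⟨abs_lt.mpr ⟨hgt, hlt⟩, ?_⟩
        rw [hU, if_pos hre', hre, hru]; norm_num
      · -- goes to B⁻
        have hd : Δd < 0 := by rw [hE'] at hle; linarith [he.1]
        have hre' : rho (e (m+1)) = -1 :=
          rho_negone_of (by rw [hE']; linarith [he.1]) hle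
        right; right
        refine ⟨⟨by rw [hE']; linarith [he.1], hle, hd⟩, ?_⟩
        rw [hU, if_neg (by rw [hre']; norm_num), hre', hre, hu]; push_cast; ring
    · -- goes to B⁺
      have hd : 0 < Δd := by rw [hE'] at hge; linarith [he.2]
      have hre' : rho (e (m+1)) = 1 :=
        rho_one_of hge (by rw [hE']; linarith [he.2])
      right; left
      refine ⟨⟨hge, by rw [hE']; linarith [he.2], hd⟩, ?_⟩
      rw [hU, if_neg (by rw [hre']; norm_num), hre', hre, hu]; push_cast; ring
  · -- B⁺ state: e m ∈ [1/2, 3/2 - Δd), u m = -α, Δd > 0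
    have hre : rho (e m) = 1 := rho_one_of he1 (by linarith)
    have hru : rho (u m) = -1 := rho_negone_of (by rw [hu]; linarith) (by rw [hu]; linarith)
    have hE' : e (m+1) = e m - 1 + Δd := by rw [hE, hru]; push_cast; ring
    have h1 : e (m+1) < 1/2 := by rw [hE']; linarith
    have h2 : -(1/2) < e (m+1) := by rw [hE']; linarith
    have hre' : rho (e (m+1)) = 0 := rho_zero_of (abs_lt.mpr ⟨h2, h1⟩)
    left
    refine ⟨abs_lt.mpr ⟨h2, h1⟩, ?_⟩
    rw [hU, if_pos hre', hre, hru]; norm_num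
  · -- B⁻ state
    have hre : rho (e m) = -1 := rho_negone_of (by linarith) he2
    have hru : rho (u m) = 1 := rho_one_of (by rw [hu]; linarith) (by rw [hu]; linarith)
    have hE' : e (m+1) = e m + 1 + Δd := by rw [hE, hru]; push_cast; ring
    have h1 : e (m+1) < 1/2 := by rw [hE']; linarith
    have h2 : -(1/2) < e (m+1) := by rw [hE']; linarith
    have hre' : rho (e (m+1)) = 0 := rho_zero_of (abs_lt.mpr ⟨h2, h1⟩)
    left
    refine ⟨abs_lt.mpr ⟨h2, h1⟩, ?_⟩
    rw [hU, if_pos hre', hre, hru]; norm_num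

lemma init_good {α Δd : ℝ} (hα : 1 < α ∧ α < 3/2) (hΔ : |Δd| ≤ 1/2)
    {e u : ℕ → ℝ} (htraj : Traj α Δd e u) {k : ℕ}
    (h9 : Cond9 α Δd e u k) : Good α Δd e u (k+2) := by
  obtain ⟨hα1, hα2⟩ := hα
  have hΔ1 : -(1/2) ≤ Δd := by rw [abs_le] at hΔ; linarith [hΔ.1]
  have hΔ2 : Δd ≤ 1/2 := (abs_le.mp hΔ).2
  obtain ⟨⟨he1, he2⟩, ⟨hm1, hm2⟩, ⟨hu1, hu2⟩⟩ := h9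
  obtain ⟨hE, hU⟩ := htraj k
  obtain ⟨hE2, hU2⟩ := htraj (k+1)
  have hre : rho (e k) = 0 := rho_zero_of (abs_lt.mpr ⟨he1, he2⟩)
  have hru : rho (u k) = 0 := rho_zero_of (abs_lt.mpr ⟨hu1, hu2⟩)
  have hE' : e (k+1) = e k + Δd := by rw [hE, hru]; push_cast; ring
  rcases lt_or_ge (e (k+1)) (1/2) with hlt | hge
  · rcases lt_or_ge (-(1/2)) (e (k+1)) with hgt | hle
    · -- |e(k+1)| < 1/2 : A state at k+1
      have hre' : rho (e (k+1)) = 0 := rho_zero_of (abs_lt.mpr ⟨hgt, hlt⟩)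
      have hA : Good α Δd e u (k+1) := by
        left
        refine ⟨abs_lt.mpr ⟨hgt, hlt⟩, ?_⟩
        rw [hU, if_pos hre', hre, hru]; norm_num
      exact good_step ⟨hα1, hα2⟩ hΔ htraj hA
    · -- e(k+1) ≤ -1/2, Δd < 0
      have hd : Δd < 0 := by rw [hE'] at hle; linarith
      have hs : rsign Δd = -1 := by simp [rsign, hd.not_gt, hd.ne]
      rw [hs] at hm1 hm2
      push_cast at hm1 hm2
      have hre' : rho (e (k+1)) = -1 := rho_negone_of (by rw [hE']; linarith) hle
      have hu1' : u (k+1) = u k + α := by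
        rw [hU, if_neg (by rw [hre']; norm_num), hre', hre]; push_cast; ring
      have hub : 1 ≤ u (k+1) ∧ u (k+1) < 3/2 := by
        constructor <;> rw [hu1'] <;> linarith
      have hru' : rho (u (k+1)) = 1 := rho_one_of (by linarith [hub.1]) hub.2
      have hE2' : e (k+2) = e (k+1) + 1 + Δd := by
        rw [hE2, hru']; push_cast; ring
      have h1 : e (k+2) < 1/2 := by rw [hE2']; linarith
      have h2 : -(1/2) < e (k+2) := by rw [hE2', hE']; linarith
      have hre2 : rho (e (k+2)) = 0 := rho_zero_of (abs_lt.mpr ⟨h2, h1⟩)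
      left
      refine ⟨abs_lt.mpr ⟨h2, h1⟩, ?_⟩
      rw [hU2, if_pos hre2, hre', hru']; norm_num
  · -- e(k+1) ≥ 1/2, Δd > 0
    have hd : 0 < Δd := by rw [hE'] at hge; linarith
    have hs : rsign Δd = 1 := by simp [rsign, hd]
    rw [hs] at hm1 hm2
    push_cast at hm1 hm2
    have hre' : rho (e (k+1)) = 1 := rho_one_of hge (by rw [hE']; linarith)
    have hu1' : u (k+1) = u k - α := by
      rw [hU, if_neg (by rw [hre']; norm_num), hre', hre]; push_cast; ring
    have hub : -(3/2) < u (k+1) ∧ u (k+1) ≤ -(1/2) := by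
      constructor <;> rw [hu1'] <;> linarith
    have hru' : rho (u (k+1)) = -1 := rho_negone_of hub.1 hub.2
    have hE2' : e (k+2) = e (k+1) - 1 + Δd := by
      rw [hE2, hru']; push_cast; ring
    have h1 : e (k+2) < 1/2 := by rw [hE2', hE']; linarith
    have h2 : -(1/2) < e (k+2) := by rw [hE2']; linarith
    have hre2 : rho (e (k+2)) = 0 := rho_zero_of (abs_lt.mpr ⟨h2, h1⟩)
    left
    refine ⟨abs_lt.mpr ⟨h2, h1⟩, ?_⟩
    rw [hU2, if_pos hre2, hre', hru']; norm_num

theorem stmt_2 (α Δd : ℝ) (hα : 1 < α ∧ α < 3/2) (hΔ : |Δd| ≤ 1/2)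
    (e u : ℕ → ℝ) (htraj : Traj α Δd e u) (k : ℕ) (h9 : Cond9 α Δd e u k) :
    ∀ h : ℕ, 1 < h → u (k+h) = -α * (rho (e (k+h)) : ℝ) := by
  have key : ∀ h : ℕ, Good α Δd e u (k + 2 + h) := by
    intro h
    induction h with
    | zero => exact init_good hα hΔ htraj h9
    | succ n ih => exact good_step hα hΔ htraj ih
  intro h hh
  obtain ⟨n, rfl⟩ : ∃ n, h = 2 + n := ⟨h - 2, by omega⟩
  have := good_rel hα (key n)
  rwa [show k + 2 + n = k + (2 + n) by ring] at this
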